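/- Let (X, O_X) be a ringed space and 0 → F' → F → F'' → 0 an exact sequence of locally free O_X-modules of finite rank. Then for every r ≥ 0 there is a finite decreasing filtration Λ^r F = G^0 ⊇ G^1 ⊇ ... ⊇ G^r ⊇ G^{r+1} = 0 by O_X-submodules with successive quotients G^p/G^{p+1} ≅ Λ^p F' ⊗_{O_X} Λ^{r-p} F''. -/

import Mathlib

open scoped TensorProduct

namespace ExtFiltAux

variable {R : Type} [CommRing R] {M : Type} [AddCommGroup M] [Module R M]
variable {I : Type} [Fintype I] [LinearOrder I]

/-- The wedge of the basis vectors indexed by an `r`-element subset, as an element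
of the `r`-th exterior power. -/
noncomputable def wedge (b : I → M) (r : ℕ) (s : {s : Finset I // s.card = r}) :
    ⋀[R]^r M :=
  ⟨ExteriorAlgebra.ιMulti_family R r b s,
    ExteriorAlgebra.ιMulti_range R r (Set.mem_range_self _)⟩

lemma span_wedge (b : Module.Basis I R M) (r : ℕ) :
    Submodule.span R (Set.range (wedge (R := R) (⇑b) r)) = ⊤ := by
  classical
  apply Submodule.map_injective_of_injective (Submodule.injective_subtype (⋀[R]^r M))
  rw [Submodule.map_span, Submodule.map_top, Submodule.range_subtype, ← Set.range_comp]
  have hco : (⋀[R]^r M).subtype ∘ wedge (R := R) (⇑b) r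
      = ExteriorAlgebra.ιMulti_family R r (⇑b) := rfl
  rw [hco]
  refine le_antisymm (Submodule.span_le.2 ?_) ?_
  · rintro x ⟨s, rfl⟩
    exact ExteriorAlgebra.ιMulti_range R r (Set.mem_range_self _)
  · rw [← ExteriorAlgebra.ιMulti_span_fixedDegree]
    refine Submodule.span_le.2 ?_
    rintro x ⟨v, rfl⟩
    have hv : (fun i => ∑ j : I, b.repr (v i) j • b j) = v := by
      ext i; exact b.sum_repr (v i)
    rw [← hv]
    have := (ExteriorAlgebra.ιMulti R r (M := M)).toMultilinearMap.map_sum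
      (g := fun (i : Fin r) (j : I) => b.repr (v i) j • b j)
    rw [show ((ExteriorAlgebra.ιMulti R r).toMultilinearMap : (Fin r → M) → _)
      = ⇑(ExteriorAlgebra.ιMulti R r) from rfl] at this
    rw [this]
    refine Submodule.sum_mem _ fun φ _ => ?_
    have h2 := (ExteriorAlgebra.ιMulti R r).toMultilinearMap.map_smul_univ
      (fun i => b.repr (v i) (φ i)) (fun i => b (φ i))
    rw [show ((ExteriorAlgebra.ιMulti R r).toMultilinearMap : (Fin r → M) → _)
      = ⇑(ExteriorAlgebra.ιMulti R r) from rfl] at h2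
    rw [h2]
    refine Submodule.smul_mem _ _ ?_
    by_cases hφ : Function.Injective φ
    · set s : Finset I := Finset.univ.image φ with hs
      have hcard : s.card = r := by
        rw [hs, Finset.card_image_of_injective _ hφ, Finset.card_univ, Fintype.card_fin]
      have hrange : Set.range φ = ↑s := by
        rw [hs]; rw [Finset.coe_image, Finset.coe_univ, Set.image_univ]
      let σ : Fin r ≃ Fin r :=
        (Equiv.ofInjective φ hφ).trans ((Equiv.setCongr hrange).trans
          (s.orderIsoOfFin hcard).toEquiv.symm)
      have key : (fun i => b (φ i))
          = (fun j => b ((s.orderIsoOfFin hcard) j)) ∘ σ := by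
        funext i
        simp only [Function.comp_apply, σ, Equiv.trans_apply, Equiv.setCongr_apply]
        congr 1
        have : (s.orderIsoOfFin hcard) ((s.orderIsoOfFin hcard).toEquiv.symm
            ⟨φ i, Finset.mem_image_of_mem φ (Finset.mem_univ i)⟩)
            = ⟨φ i, Finset.mem_image_of_mem φ (Finset.mem_univ i)⟩ := by
          exact (s.orderIsoOfFin hcard).apply_symm_apply _
        simp only [Equiv.ofInjective_apply]
        exact congrArg Subtype.val this.symm
      rw [key, (ExteriorAlgebra.ιMulti R r (M := M)).map_perm]
      refine Submodule.smul_of_tower_mem _ _ ?_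
      exact Submodule.subset_span ⟨⟨s, hcard⟩, rfl⟩
    · simp only [Function.Injective, not_forall] at hφ
      obtain ⟨i, j, hij, hne⟩ := hφ
      rw [(ExteriorAlgebra.ιMulti R r).map_eq_zero_of_eq _ (by rw [hij]) hne]
      exact Submodule.zero_mem _


lemma coe_wedge (b : I → M) (r : ℕ) (s : {s : Finset I // s.card = r}) :
    (wedge (R := R) b r s : ExteriorAlgebra R M) = ExteriorAlgebra.ιMulti_family R r b s := rfl

variable (R) in
/-- Dual functional to the wedge of basis vectors indexed by `s`. -/
noncomputable def dualFun (b : Module.Basis I R M) (r : ℕ) (s : {s : Finset I // s.card = r}) :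
    ExteriorAlgebra R M →ₗ[R] R :=
  ExteriorAlgebra.liftAlternating fun n =>
    if h : n = r then
      ((Matrix.detRowAlternating (R := R) (n := Fin r)).compLinearMap
        (LinearMap.pi fun j : Fin r => b.coord (s.1.orderIsoOfFin s.2 j))).domDomCongr
        (finCongr h.symm)
    else 0

lemma det_eval (b : Module.Basis I R M) (r : ℕ) (s t : {s : Finset I // s.card = r}) :
    Matrix.det (Matrix.of fun i j : Fin r =>
      b.repr (b ((t.1.orderIsoOfFin t.2 i : I))) ((s.1.orderIsoOfFin s.2 j : I)))
      = if t = s then 1 else 0 := by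
  classical
  by_cases h : t = s
  · subst h
    rw [if_pos rfl]
    have : (Matrix.of fun i j : Fin r =>
        b.repr (b ((t.1.orderIsoOfFin t.2 i : I))) ((t.1.orderIsoOfFin t.2 j : I)))
        = (1 : Matrix (Fin r) (Fin r) R) := by
      ext i j
      rw [Matrix.of_apply, b.repr_self, Finsupp.single_apply, Matrix.one_apply]
      congr 1
      simp only [eq_iff_iff]
      constructor
      · intro hh
        have := (t.1.orderIsoOfFin t.2).injective (Subtype.ext hh)
        exact this
      · rintro rfl; rfl
    rw [this, Matrix.det_one]
  · rw [if_neg h]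
    have hsub : ¬ t.1 ⊆ s.1 := by
      intro hsub
      exact h (Subtype.ext (Finset.eq_of_subset_of_card_le hsub (by rw [s.2, t.2])))
    obtain ⟨x, hxt, hxs⟩ := Finset.not_subset.1 hsub
    set i0 := (t.1.orderIsoOfFin t.2).symm ⟨x, hxt⟩ with hi0
    apply Matrix.det_eq_zero_of_row_eq_zero i0
    intro j
    rw [Matrix.of_apply, b.repr_self, Finsupp.single_apply]
    rw [if_neg]
    intro hh
    apply hxs
    have hx : ((t.1.orderIsoOfFin t.2 i0 : I)) = x := by
      rw [hi0, OrderIso.apply_symm_apply]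
    rw [← hx, hh]
    exact (s.1.orderIsoOfFin s.2 j).2

lemma dualFun_wedge (b : Module.Basis I R M) (r : ℕ) (s t : {s : Finset I // s.card = r}) :
    dualFun R b r s (ExteriorAlgebra.ιMulti_family R r ⇑b t) = if t = s then 1 else 0 := by
  classical
  unfold ExteriorAlgebra.ιMulti_family
  rw [dualFun,
    ExteriorAlgebra.liftAlternating_apply_ιMulti, dif_pos rfl]
  rw [AlternatingMap.domDomCongr_apply, AlternatingMap.compLinearMap_apply]
  rw [← det_eval b r s t]
  rfl

lemma linearIndependent_wedge (b : Module.Basis I R M) (r : ℕ) :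
    LinearIndependent R (wedge (R := R) (⇑b) r) := by
  classical
  rw [Fintype.linearIndependent_iff]
  intro g hg s
  have h0 : dualFun R b r s
      ((∑ t, g t • wedge (R := R) (⇑b) r t : ⋀[R]^r M) : ExteriorAlgebra R M) = g s := by
    rw [Submodule.coe_sum, map_sum]
    simp only [Submodule.coe_smul, map_smul, coe_wedge, dualFun_wedge, smul_eq_mul,
      mul_ite, mul_one, mul_zero]
    rw [Finset.sum_ite_eq' Finset.univ s g]
    simp
  rw [hg] at h0
  simpa using h0.symm

/-- A basis of the `r`-th exterior power of a module with basis indexed by a finite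
linearly ordered type `I`, indexed by the `r`-element subsets of `I`. -/
noncomputable def wedgeBasis (b : Module.Basis I R M) (r : ℕ) :
    Module.Basis {s : Finset I // s.card = r} R (⋀[R]^r M) :=
  Module.Basis.mk (linearIndependent_wedge b r) (le_of_eq (span_wedge b r).symm)

end ExtFiltAux

set_option maxHeartbeats 2000000 in
set_option synthInstance.maxHeartbeats 1000000 in
/-- Exterior-power filtration (module-theoretic version): given a short exact sequence
`0 → M' → M → M'' → 0` of finite free modules over a commutative ring `R`, for every
`r ≥ 0` there is a finite decreasing filtration `Λ^r M = G^0 ⊇ G^1 ⊇ ⋯ ⊇ G^r ⊇ G^{r+1} = 0`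
by submodules with successive quotients `G^p/G^{p+1} ≅ Λ^p M' ⊗ Λ^{r-p} M''` (expressed as:
a surjection `G^p → Λ^p M' ⊗ Λ^{r-p} M''` with kernel `G^{p+1}`). -/
theorem exteriorPower_filtration {R M' M M'' : Type} [CommRing R]
    [AddCommGroup M'] [Module R M'] [AddCommGroup M] [Module R M]
    [AddCommGroup M''] [Module R M'']
    [Module.Free R M'] [Module.Finite R M']
    [Module.Free R M] [Module.Finite R M]
    [Module.Free R M''] [Module.Finite R M'']
    (f : M' →ₗ[R] M) (g : M →ₗ[R] M'')
    (hf : Function.Injective f) (hg : Function.Surjective g)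
    (hfg : Function.Exact f g) (r : ℕ) :
    ∃ G : ℕ → Submodule R (⋀[R]^r M),
      G 0 = ⊤ ∧ (∀ p, r + 1 ≤ p → G p = ⊥) ∧ (∀ p, G (p + 1) ≤ G p) ∧
      ∀ p ≤ r, ∃ φ : ↥(G p) →ₗ[R] ((⋀[R]^p M') ⊗[R] (⋀[R]^(r - p) M'')),
        Function.Surjective φ ∧
        LinearMap.ker φ = Submodule.comap (G p).subtype (G (p + 1)) := by
  classical
  set ι' := Module.Free.ChooseBasisIndex R M' with hι'
  set ι'' := Module.Free.ChooseBasisIndex R M'' with hι''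
  letI : LinearOrder ι' := LinearOrder.lift' (Fintype.equivFin ι') (Fintype.equivFin ι').injective
  letI : LinearOrder ι'' :=
    LinearOrder.lift' (Fintype.equivFin ι'') (Fintype.equivFin ι'').injective
  letI : LinearOrder (ι' ⊕ ι'') :=
    LinearOrder.lift' (Fintype.equivFin (ι' ⊕ ι'')) (Fintype.equivFin (ι' ⊕ ι'')).injective
  let b' := Module.Free.chooseBasis R M'
  let b'' := Module.Free.chooseBasis R M''
  obtain ⟨l, hl⟩ := Module.projective_lifting_property g LinearMap.id hg
  let e : M ≃ₗ[R] M' × M'' := (hfg.splitSurjectiveEquiv hf ⟨l, hl⟩).1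
  let bM : Module.Basis (ι' ⊕ ι'') R M := (b'.prod b'').map e.symm
  let B := ExtFiltAux.wedgeBasis bM r
  let q : {s : Finset (ι' ⊕ ι'') // s.card = r} → ℕ := fun s => s.1.toLeft.card
  have hqle : ∀ s, q s ≤ r := by
    intro s
    have := Finset.card_toLeft_le (u := s.1)
    rw [s.2] at this
    exact this
  let G : ℕ → Submodule R (⋀[R]^r M) := fun p => Submodule.span R (B '' {s | p ≤ q s})
  refine ⟨G, ?_, ?_, ?_, ?_⟩
  · show Submodule.span R (B '' {s | 0 ≤ q s}) = ⊤
    have : {s | 0 ≤ q s} = Set.univ := by ext s; simp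
    rw [this, Set.image_univ, Module.Basis.span_eq]
  · intro p hp
    show Submodule.span R (B '' {s | p ≤ q s}) = ⊥
    have : {s | p ≤ q s} = ∅ := by
      ext s
      simp only [Set.mem_setOf_eq, Set.mem_empty_iff_false, iff_false, not_le]
      exact lt_of_le_of_lt (hqle s) (Nat.lt_of_lt_of_le (Nat.lt_succ_self r) hp)
    rw [this, Set.image_empty, Submodule.span_empty]
  · intro p
    exact Submodule.span_mono (Set.image_mono fun s hs => le_trans (Nat.le_succ p) hs)
  · intro p hp
    let b'p := ExtFiltAux.wedgeBasis b' p
    let b''p := ExtFiltAux.wedgeBasis b'' (r - p)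
    let Tb := Module.Basis.tensorProduct b'p b''p
    have hright : ∀ (s : {s : Finset (ι' ⊕ ι'') // s.card = r}), q s = p →
        s.1.toRight.card = r - p := by
      intro s h
      have h' : s.1.toLeft.card = p := h
      have := Finset.card_toLeft_add_card_toRight (u := s.1)
      rw [s.2] at this
      omega
    let v : {s : Finset (ι' ⊕ ι'') // s.card = r} → (⋀[R]^p M') ⊗[R] (⋀[R]^(r - p) M'') :=
      fun s => if h : q s = p then Tb (⟨s.1.toLeft, h⟩, ⟨s.1.toRight, hright s h⟩) else 0
    let Φ : (⋀[R]^r M) →ₗ[R] (⋀[R]^p M') ⊗[R] (⋀[R]^(r - p) M'') := B.constr R v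
    have hΦB : ∀ s, Φ (B s) = v s := fun s => B.constr_basis R v s
    -- surjectivity
    have hsurj : Function.Surjective (Φ ∘ₗ (G p).subtype) := by
      rw [← LinearMap.range_eq_top, eq_top_iff, ← Tb.span_eq, Submodule.span_le]
      rintro x ⟨⟨u, u'⟩, rfl⟩
      have hcard : (u.1.disjSum u'.1).card = r := by
        rw [Finset.card_disjSum, u.2, u'.2]; omega
      let s : {s : Finset (ι' ⊕ ι'') // s.card = r} := ⟨u.1.disjSum u'.1, hcard⟩
      have hq : q s = p := by
        show (u.1.disjSum u'.1).toLeft.card = p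
        rw [Finset.toLeft_disjSum, u.2]
      have hmem : B s ∈ G p := Submodule.subset_span ⟨s, by simp [Set.mem_setOf_eq, hq], rfl⟩
      refine ⟨⟨B s, hmem⟩, ?_⟩
      show Φ (B s) = Tb (u, u')
      rw [hΦB s]
      show v s = Tb (u, u')
      rw [show v s = if h : q s = p then
        Tb (⟨s.1.toLeft, h⟩, ⟨s.1.toRight, hright s h⟩) else 0 from rfl, dif_pos hq]
      congr 1
      refine Prod.ext (Subtype.ext ?_) (Subtype.ext ?_)
      · exact Finset.toLeft_disjSum (s := u.1) (t := u'.1)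
      · exact Finset.toRight_disjSum (s := u.1) (t := u'.1)
    -- coordinate computation
    have hcoord : ∀ (x : ⋀[R]^r M) (s₀ : {s : Finset (ι' ⊕ ι'') // s.card = r})
        (h₀ : q s₀ = p),
        Tb.coord (⟨s₀.1.toLeft, h₀⟩, ⟨s₀.1.toRight, hright s₀ h₀⟩) (Φ x) = B.repr x s₀ := by
      intro x s₀ h₀
      set j₀ : {u : Finset ι' // u.card = p} × {u : Finset ι'' // u.card = r - p} :=
        (⟨s₀.1.toLeft, h₀⟩, ⟨s₀.1.toRight, hright s₀ h₀⟩) with hj₀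
      have hΦx : Φ x = (B.repr x).sum fun s c => c • v s := B.constr_apply R v x
      rw [hΦx, map_finsuppSum]
      rw [Finsupp.sum_eq_single s₀ ?_ ?_]
      · rw [map_smul]
        rw [show v s₀ = Tb j₀ from dif_pos h₀]
        rw [Module.Basis.coord_apply, Module.Basis.repr_self, Finsupp.single_eq_same]
        simp
      · intro s hsne hne
        rw [map_smul]
        suffices h : Tb.coord j₀ (v s) = 0 by rw [h, smul_zero]
        by_cases hq : q s = p
        · rw [show v s = Tb (⟨s.1.toLeft, hq⟩, ⟨s.1.toRight, hright s hq⟩) from dif_pos hq]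
          rw [Module.Basis.coord_apply, Module.Basis.repr_self, Finsupp.single_apply, if_neg]
          intro heq
          apply hne
          have h1 : s.1.toLeft = s₀.1.toLeft := congrArg (fun z => (z.1 : Finset ι')) heq
          have h2 : s.1.toRight = s₀.1.toRight := congrArg (fun z => (z.2 : Finset ι'')) heq
          apply Subtype.ext
          rw [← Finset.toLeft_disjSum_toRight (u := s.1),
            ← Finset.toLeft_disjSum_toRight (u := s₀.1), h1, h2]
        · rw [show v s = 0 from dif_neg hq, map_zero]
      · intro _
        rw [zero_smul, map_zero]
    -- kernel
    have hker : LinearMap.ker (Φ ∘ₗ (G p).subtype) = Submodule.comap (G p).subtype (G (p + 1)) := by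
      ext x
      simp only [LinearMap.mem_ker, Submodule.mem_comap, LinearMap.comp_apply,
        Submodule.coe_subtype]
      constructor
      · intro hΦ0
        have hx' : ↑(B.repr (x : ⋀[R]^r M)).support ⊆ {s | p ≤ q s} :=
          (Module.Basis.mem_span_image B).1 x.2
        apply (Module.Basis.mem_span_image B).2
        intro s hs
        have hps : p ≤ q s := hx' hs
        rcases eq_or_lt_of_le hps with heq | hlt
        · exfalso
          have hc := hcoord (x : ⋀[R]^r M) s heq.symm
          rw [hΦ0, map_zero] at hc
          exact (Finsupp.mem_support_iff.1 hs) hc.symm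
        · exact hlt
      · intro hmem
        have hle : G (p + 1) ≤ LinearMap.ker Φ := by
          rw [show G (p + 1) = Submodule.span R (B '' {s | p + 1 ≤ q s}) from rfl,
            Submodule.span_le]
          rintro y ⟨s, hs, rfl⟩
          simp only [SetLike.mem_coe, LinearMap.mem_ker]
          rw [hΦB s]
          show (if h : q s = p then
            Tb (⟨s.1.toLeft, h⟩, ⟨s.1.toRight, hright s h⟩) else 0) = 0
          rw [dif_neg]
          intro hq
          have : p + 1 ≤ q s := hs
          omega
        exact hle hmem
    exact ⟨Φ ∘ₗ (G p).subtype, hsurj, hker⟩
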